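/- Let A be a finite alphabet, let θ ∈ (0, 2), and let L ⊆ A* be a language such that Isom_θ(L) acts transitively on L (i.e., for all u, v ∈ L there exists φ ∈ Isom_θ(L) with φ(u) = v). Then L is finite. -/

import Mathlib

/-- A cost function for Levenshtein distance (formerly in Mathlib,
`Mathlib/Data/List/EditDistance/Defs.lean`, reproduced with its old meaning). -/
structure Levenshtein.Cost (α β δ : Type*) where
  delete : α → δ
  insert : β → δ
  substitute : α → β → δ

/-- Helper for the Levenshtein dynamic program (formerly in Mathlib). -/
def Levenshtein.impl {α β δ : Type*} [AddZeroClass δ] [Min δ]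
    (C : Levenshtein.Cost α β δ)
    (xs : List α) (y : β) (d : {r : List δ // 0 < r.length}) :
    {r : List δ // 0 < r.length} :=
  let ⟨ds, w⟩ := d
  xs.zip (ds.zip ds.tail) |>.foldr
    (init := ⟨[C.insert y + ds.getLast (List.length_pos_iff.mp w)], by simp⟩)
    (fun ⟨x, d₀, d₁⟩ ⟨r, w⟩ =>
      ⟨min (C.delete x + r[0]) (min (C.insert y + d₀) (C.substitute x y + d₁)) :: r, by simp⟩)

/-- Levenshtein distances from all suffixes of `xs` to `ys` (formerly in Mathlib). -/
def suffixLevenshtein {α β δ : Type*} [AddZeroClass δ] [Min δ]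
    (C : Levenshtein.Cost α β δ) (xs : List α) (ys : List β) :
    {r : List δ // 0 < r.length} :=
  ys.foldr
    (Levenshtein.impl C xs)
    (xs.foldr (init := ⟨[0], by simp⟩) (fun a ⟨r, w⟩ => ⟨(C.delete a + r[0]) :: r, by simp⟩))

/-- The Levenshtein distance with cost function `C` (formerly in Mathlib). -/
def levenshtein {α β δ : Type*} [AddZeroClass δ] [Min δ]
    (C : Levenshtein.Cost α β δ) (xs : List α) (ys : List β) : δ :=
  let ⟨r, w⟩ := suffixLevenshtein C xs ys
  r[0]


/-- Cost structure for the generalized Levenshtein distance: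
insertions and deletions cost `γ`, substitutions cost `θ`. -/
def levCost (A : Type*) [DecidableEq A] (γ θ : ℝ) : Levenshtein.Cost A A ℝ where
  delete _ := γ
  insert _ := γ
  substitute a b := if a = b then 0 else θ

/-- The generalized Levenshtein distance `lev_{γ,θ}` between two words over `A`:
the minimal total cost of transforming one word into the other by insertions and
deletions (of cost `γ`) and substitutions (of cost `θ`). -/
def lev {A : Type*} [DecidableEq A] (γ θ : ℝ) (u v : List A) : ℝ :=
  levenshtein (levCost A γ θ) u v

namespace Levenshtein
variable {α β δ : Type*} [AddZeroClass δ] [Min δ] (C : Levenshtein.Cost α β δ)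

theorem impl_cons_fst_zero' (x : α) (xs : List α) (y : β) (d : δ) (ds : List δ) (w)
    (w' : 0 < List.length ds) :
    (impl C (x :: xs) y ⟨d :: ds, w⟩).1[0]'(by cases ds <;> simp [impl] at w' ⊢) =
      min (C.delete x + (impl C xs y ⟨ds, w'⟩).1[0]'(impl C xs y ⟨ds, w'⟩).2)
        (min (C.insert y + d) (C.substitute x y + ds[0])) :=
  match ds, w' with | _ :: _, _ => rfl

theorem impl_length' (xs : List α) (y : β) (d : {r : List δ // 0 < r.length})
    (w : d.1.length = xs.length + 1) :
    (impl C xs y d).1.length = xs.length + 1 := by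
  induction xs generalizing d with
  | nil => rfl
  | cons x xs ih =>
    dsimp [impl]
    match d, w with
    | ⟨d₁ :: d₂ :: ds, _⟩, w =>
      dsimp
      congr 1
      exact ih ⟨d₂ :: ds, (by simp)⟩ (by simpa using w)

theorem suffixLevenshtein_length' (xs : List α) (ys : List β) :
    (suffixLevenshtein C xs ys).1.length = xs.length + 1 := by
  induction ys with
  | nil =>
    dsimp [suffixLevenshtein]
    induction xs with
    | nil => rfl
    | cons _ xs ih => simp_all
  | cons y ys ih =>
    dsimp [suffixLevenshtein]
    rw [impl_length']
    exact ih

theorem sub_ext' {x y : {r : List δ // 0 < r.length}} (w₀ : x.1[0]'x.2 = y.1[0]'y.2)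
    (w : x.1.tail = y.1.tail) : x = y := by
  obtain ⟨_ | ⟨a, l⟩, hx⟩ := x
  · simp at hx
  obtain ⟨_ | ⟨b, m⟩, hy⟩ := y
  · simp at hy
  simp_all

theorem suffixLevenshtein_cons₁' (x : α) (xs : List α) (ys : List β) :
    suffixLevenshtein C (x :: xs) ys =
      ⟨levenshtein C (x :: xs) ys :: (suffixLevenshtein C xs ys).1, by simp⟩ := by
  induction ys with
  | nil => rfl
  | cons y ys ih =>
    apply sub_ext'
    · rfl
    · show (impl C (x :: xs) y (suffixLevenshtein C (x :: xs) ys)).1.tail =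
        (impl C xs y (suffixLevenshtein C xs ys)).1
      rw [ih]
      generalize suffixLevenshtein C xs ys = s
      obtain ⟨_ | ⟨d0, ds'⟩, hs⟩ := s
      · simp at hs
      · rfl

end Levenshtein

open Levenshtein in
theorem levenshtein_nil_cons {α β δ : Type*} [AddZeroClass δ] [Min δ]
    (C : Levenshtein.Cost α β δ) (y : β) (ys : List β) :
    levenshtein C ([] : List α) (y :: ys) = C.insert y + levenshtein C [] ys := by
  have hl := suffixLevenshtein_length' C ([] : List α) ys
  have key : ∀ s : {r : List δ // 0 < r.length}, s.1.length = 1 →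
      (impl C ([] : List α) y s).1[0]'(impl C [] y s).2 = C.insert y + s.1[0]'s.2 := by
    intro s hs
    obtain ⟨_ | ⟨d, _ | ⟨e, l⟩⟩, h⟩ := s
    · simp at h
    · rfl
    · simp at hs
  exact key _ hl

@[simp]
theorem levenshtein_nil_nil {α β δ : Type*} [AddZeroClass δ] [Min δ]
    (C : Levenshtein.Cost α β δ) : levenshtein C ([] : List α) ([] : List β) = 0 := rfl

theorem levenshtein_cons_nil {α β δ : Type*} [AddZeroClass δ] [Min δ]
    (C : Levenshtein.Cost α β δ) (x : α) (xs : List α) :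
    levenshtein C (x :: xs) ([] : List β) = C.delete x + levenshtein C xs [] := rfl

open Levenshtein in
theorem levenshtein_cons_cons {α β δ : Type*} [AddZeroClass δ] [Min δ]
    (C : Levenshtein.Cost α β δ) (x : α) (xs : List α) (y : β) (ys : List β) :
    levenshtein C (x :: xs) (y :: ys) =
      min (C.delete x + levenshtein C xs (y :: ys))
        (min (C.insert y + levenshtein C (x :: xs) ys)
          (C.substitute x y + levenshtein C xs ys)) := by
  have h1 : levenshtein C (x :: xs) (y :: ys) =
      (impl C (x :: xs) y (suffixLevenshtein C (x :: xs) ys)).1[0]'(by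
        rw [impl_length' _ _ _ _ (suffixLevenshtein_length' C _ _)]; simp) := rfl
  have h2 : levenshtein C xs (y :: ys) =
      (impl C xs y (suffixLevenshtein C xs ys)).1[0]'(impl C xs y _).2 := rfl
  have h3 : levenshtein C xs ys = (suffixLevenshtein C xs ys).1[0]'(suffixLevenshtein C xs ys).2 := rfl
  rw [h1, h2, h3]
  simp only [suffixLevenshtein_cons₁']
  rw [impl_cons_fst_zero']

section lemmas
variable {A : Type*} [DecidableEq A] {θ : ℝ} {u v : List A}

lemma lev_nil_left : ∀ v : List A, lev 1 θ [] v = v.length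
  | [] => by simp [lev]
  | y :: ys => by
    have := lev_nil_left ys
    simp only [lev, levenshtein_nil_cons] at this ⊢
    rw [this]; simp [levCost]; ring

lemma lev_nil_right : ∀ u : List A, lev 1 θ u [] = u.length
  | [] => by simp [lev]
  | x :: xs => by
    have := lev_nil_right xs
    simp only [lev, levenshtein_cons_nil] at this ⊢
    rw [this]; simp [levCost]; ring

lemma lev_cons_cons (x y : A) (xs ys : List A) :
    lev 1 θ (x :: xs) (y :: ys) =
      min (1 + lev 1 θ xs (y :: ys))
        (min (1 + lev 1 θ (x :: xs) ys)
          ((if x = y then (0:ℝ) else θ) + lev 1 θ xs ys)) := by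
  simp [lev, levenshtein_cons_cons, levCost]

lemma subcost_nonneg (hθ : 0 ≤ θ) (x y : A) : 0 ≤ (if x = y then (0:ℝ) else θ) := by
  split <;> simp [hθ]

lemma lev_nonneg (hθ : 0 ≤ θ) : ∀ u v : List A, 0 ≤ lev 1 θ u v := by
  intro u
  induction u with
  | nil => intro v; rw [lev_nil_left]; positivity
  | cons x xs ihu =>
    intro v
    induction v with
    | nil => rw [lev_nil_right]; positivity
    | cons y ys ihv =>
      rw [lev_cons_cons]
      have h1 := ihu (y :: ys)
      have h2 := ihu ys
      have hc := subcost_nonneg (A := A) hθ x y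
      refine le_min (by linarith) (le_min (by linarith) (by linarith))

lemma lev_length_le₁ (hθ : 0 ≤ θ) :
    ∀ u v : List A, (v.length : ℝ) ≤ lev 1 θ u v + u.length := by
  intro u
  induction u with
  | nil => intro v; rw [lev_nil_left]; simp
  | cons x xs ihu =>
    intro v
    induction v with
    | nil =>
      have := lev_nonneg hθ (x :: xs) ([] : List A)
      simp only [List.length_nil, Nat.cast_zero]
      positivity
    | cons y ys ihv =>
      rw [lev_cons_cons]
      have hdel := ihu (y :: ys)
      have hsub := ihu ys
      have hc := subcost_nonneg (A := A) hθ x y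
      simp only [List.length_cons, Nat.cast_add, Nat.cast_one] at *
      rw [← sub_le_iff_le_add]
      refine le_min (by linarith) (le_min (by linarith) (by linarith))

lemma lev_length_le₂ (hθ : 0 ≤ θ) :
    ∀ u v : List A, (u.length : ℝ) ≤ lev 1 θ u v + v.length := by
  intro u
  induction u with
  | nil => intro v; have := lev_nonneg hθ ([] : List A) v; simp; positivity
  | cons x xs ihu =>
    intro v
    induction v with
    | nil => rw [lev_nil_right]; simp
    | cons y ys ihv =>
      rw [lev_cons_cons]
      have hdel := ihu (y :: ys)
      have hsub := ihu ys
      have hc := subcost_nonneg (A := A) hθ x y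
      simp only [List.length_cons, Nat.cast_add, Nat.cast_one] at *
      rw [← sub_le_iff_le_add]
      refine le_min (by linarith) (le_min (by linarith) (by linarith))

lemma lev_le_min_bound (hθ : 0 ≤ θ) :
    ∀ u v : List A, lev 1 θ u v ≤ θ * min (u.length : ℝ) (v.length : ℝ) +
      |(u.length : ℝ) - v.length| := by
  intro u
  induction u with
  | nil =>
    intro v
    rw [lev_nil_left]
    simp [abs_of_nonpos]
  | cons x xs ihu =>
    intro v
    cases v with
    | nil =>
      rw [lev_nil_right]
      simp only [List.length_cons, List.length_nil, Nat.cast_zero]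
      push_cast
      have h0 : (0:ℝ) ≤ (xs.length : ℝ) + 1 := by positivity
      rw [min_eq_right h0, sub_zero, abs_of_nonneg h0]
      linarith
    | cons y ys =>
      rw [lev_cons_cons]
      have hsub := ihu ys
      have hc : (if x = y then (0:ℝ) else θ) ≤ θ := by split <;> simp [hθ]
      have habs : |((x :: xs).length : ℝ) - ((y :: ys).length : ℝ)|
          = |(xs.length : ℝ) - (ys.length : ℝ)| := by
        simp only [List.length_cons]; push_cast; ring_nf
      have hmin : min (((x :: xs).length : ℝ)) (((y :: ys).length : ℝ))
          = min (xs.length : ℝ) (ys.length : ℝ) + 1 := by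
        simp only [List.length_cons]; push_cast
        rw [min_add_add_right]
      calc min (1 + lev 1 θ xs (y :: ys))
            (min (1 + lev 1 θ (x :: xs) ys)
              ((if x = y then (0:ℝ) else θ) + lev 1 θ xs ys))
          ≤ (if x = y then (0:ℝ) else θ) + lev 1 θ xs ys :=
            (min_le_right _ _).trans (min_le_right _ _)
        _ ≤ θ + (θ * min (xs.length : ℝ) (ys.length : ℝ) + |(xs.length : ℝ) - ys.length|) := by
            linarith
        _ ≤ _ := by rw [habs, hmin]; ring_nf; linarith [abs_nonneg ((xs.length : ℝ) - ys.length)]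


lemma lev_ins_le (a : A) : ∀ u v : List A, lev 1 θ u (a :: v) ≤ 1 + lev 1 θ u v := by
  intro u v
  cases u with
  | nil => rw [lev_nil_left, lev_nil_left]; simp; linarith
  | cons x xs =>
    rw [lev_cons_cons]
    exact (min_le_right _ _).trans (min_le_left _ _)

lemma lev_del_le (a : A) : ∀ u v : List A, lev 1 θ (a :: u) v ≤ 1 + lev 1 θ u v := by
  intro u v
  cases v with
  | nil => rw [lev_nil_right, lev_nil_right]; simp; linarith
  | cons y ys =>
    rw [lev_cons_cons]
    exact min_le_left _ _

lemma lev_cons₂_le (a : A) (u v : List A) : lev 1 θ (a :: u) (a :: v) ≤ lev 1 θ u v := by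
  rw [lev_cons_cons]
  refine ((min_le_right _ _).trans (min_le_right _ _)).trans ?_
  simp

lemma lev_sublist_le (h : u.Sublist v) :
    lev 1 θ u v ≤ (v.length : ℝ) - u.length := by
  induction h with
  | slnil => simp [lev_nil_left]
  | cons a h ih =>
    refine (lev_ins_le a _ _).trans ?_
    simp only [List.length_cons]
    push_cast
    linarith
  | cons_cons a h ih =>
    refine (lev_cons₂_le a _ _).trans ?_
    simp only [List.length_cons]
    push_cast
    linarith

lemma lev_sublist_le' (h : u.Sublist v) :
    lev 1 θ v u ≤ (v.length : ℝ) - u.length := by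
  induction h with
  | slnil => simp [lev_nil_left]
  | cons a h ih =>
    refine (lev_del_le a _ _).trans ?_
    simp only [List.length_cons]
    push_cast
    linarith
  | cons_cons a h ih =>
    refine (lev_cons₂_le a _ _).trans ?_
    simp only [List.length_cons]
    push_cast
    linarith

lemma lev_sublist_eq (hθ : 0 ≤ θ) (h : u.Sublist v) :
    lev 1 θ u v = (v.length : ℝ) - u.length :=
  le_antisymm (lev_sublist_le h) (by linarith [lev_length_le₁ hθ u v])

lemma lev_sublist_eq' (hθ : 0 ≤ θ) (h : u.Sublist v) :
    lev 1 θ v u = (v.length : ℝ) - u.length :=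
  le_antisymm (lev_sublist_le' h) (by linarith [lev_length_le₂ hθ v u])

end lemmas

/-- The isometry group of a language `L ⊆ A*` with respect to a distance `d` on `A*`:
the group (under composition) of bijections of `L` preserving `d`. -/
def IsomGroup {A : Type*} (d : List A → List A → ℝ) (L : Set (List A)) :
    Subgroup (Equiv.Perm L) where
  carrier := {φ : Equiv.Perm L | ∀ u v : L, d (φ u) (φ v) = d u v}
  one_mem' := by intro u v; rfl
  mul_mem' := by intro φ ψ hφ hψ u v; simp only [Equiv.Perm.mul_apply]; rw [hφ, hψ]
  inv_mem' := by
    intro φ hφ u v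
    have h := hφ (φ⁻¹ u) (φ⁻¹ v)
    simpa using h.symm

lemma mem_IsomGroup {A : Type*} {d : List A → List A → ℝ} {L : Set (List A)}
    {φ : Equiv.Perm L} :
    φ ∈ IsomGroup d L ↔ ∀ u v : L, d (φ u) (φ v) = d u v := Iff.rfl

/-- For a finite alphabet `A`, `θ ∈ (0, 2)`, and a language `L ⊆ A*` on
which `Isom_θ(L)` acts transitively, `L` is finite. -/
theorem stmt_5 {A : Type*} [Fintype A] [DecidableEq A] (θ : ℝ)
    (hθ0 : 0 < θ) (hθ2 : θ < 2) (L : Set (List A))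
    (htrans : ∀ u v : L, ∃ φ ∈ IsomGroup (lev 1 θ) L, φ u = v) :
    L.Finite := by
  by_contra hfin
  have hinf : L.Infinite := hfin
  have hθ0' : (0:ℝ) ≤ θ := le_of_lt hθ0
  have h2θ : (0:ℝ) < 2 - θ := by linarith
  -- a word of minimal length in L
  have hne : L.Nonempty := hinf.nonempty
  obtain ⟨u0, hu0L, hu0len⟩ : ∃ u0 ∈ L, u0.length = sInf (List.length '' L) := by
    obtain ⟨u0, h1, h2⟩ := Nat.sInf_mem (hne.image List.length)
    exact ⟨u0, h1, h2⟩
  have hmin : ∀ y ∈ L, u0.length ≤ y.length := fun y hy =>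
    hu0len ▸ Nat.sInf_le ⟨y, hy, rfl⟩
  set n : ℝ := (u0.length : ℝ) with hn
  -- the key inequality, valid at every point of L by transitivity
  have star : ∀ u v w : L,
      lev 1 θ v.1 u.1 + lev 1 θ v.1 w.1 - lev 1 θ u.1 w.1 ≥
        (2 - θ) * (min (lev 1 θ v.1 u.1) (lev 1 θ v.1 w.1) + n * (1 - θ)) - 2 * n := by
    intro u v w
    obtain ⟨φ, hm, hv⟩ := htrans v ⟨u0, hu0L⟩
    have hiso := mem_IsomGroup.mp hm
    have hvcoe : ((φ v : L) : List A) = u0 := by rw [hv]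
    set a : List A := ↑(φ u) with ha
    set b : List A := ↑(φ w) with hb
    have haL : a ∈ L := (φ u).2
    have hbL : b ∈ L := (φ w).2
    have e1 : lev 1 θ u0 a = lev 1 θ v.1 u.1 := by
      rw [← hvcoe]; exact hiso v u
    have e2 : lev 1 θ u0 b = lev 1 θ v.1 w.1 := by
      rw [← hvcoe]; exact hiso v w
    have e3 : lev 1 θ a b = lev 1 θ u.1 w.1 := hiso u w
    set p : ℝ := (a.length : ℝ) with hp
    set q : ℝ := (b.length : ℝ) with hq
    have i4a : n ≤ p := by rw [hn, hp]; exact_mod_cast hmin a haL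
    have i4b : n ≤ q := by rw [hn, hq]; exact_mod_cast hmin b hbL
    have i1 : p - n ≤ lev 1 θ u0 a := by
      have := lev_length_le₁ hθ0' u0 a; linarith
    have i2 : q - n ≤ lev 1 θ u0 b := by
      have := lev_length_le₁ hθ0' u0 b; linarith
    have i3 : lev 1 θ a b ≤ θ * min p q + |p - q| := lev_le_min_bound hθ0' a b
    have i5 : lev 1 θ u0 a ≤ θ * n + (p - n) := by
      have h := lev_le_min_bound hθ0' u0 a
      rw [min_eq_left i4a, abs_of_nonpos (by linarith)] at h
      linarith
    have i6 : lev 1 θ u0 b ≤ θ * n + (q - n) := by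
      have h := lev_le_min_bound hθ0' u0 b
      rw [min_eq_left i4b, abs_of_nonpos (by linarith)] at h
      linarith
    -- abbreviations
    set D1 : ℝ := lev 1 θ u0 a
    set D2 : ℝ := lev 1 θ u0 b
    set D3 : ℝ := lev 1 θ a b
    have hA : min p q + max p q = p + q := min_add_max p q
    have hB : max p q - min p q = |p - q| := by rw [abs_sub_comm]; exact max_sub_min_eq_abs p q
    have hC : min D1 D2 + n * (1 - θ) ≤ min p q := by
      have c1 : min D1 D2 + n * (1 - θ) ≤ D1 + n * (1 - θ) := by
        have := min_le_left D1 D2; linarith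
      have c2 : min D1 D2 + n * (1 - θ) ≤ D2 + n * (1 - θ) := by
        have := min_le_right D1 D2; linarith
      refine le_min (by nlinarith) (by nlinarith)
    have hD : (2 - θ) * (min D1 D2 + n * (1 - θ)) ≤ (2 - θ) * min p q :=
      mul_le_mul_of_nonneg_left hC (le_of_lt h2θ)
    have hexp : (2 - θ) * min p q = 2 * min p q - θ * min p q := by ring
    rw [← e1, ← e2, ← e3]
    linarith
  -- Higman's lemma: an infinite sublist chain in L
  have hpwoA : (Set.univ : Set A).PartiallyWellOrderedOn (· = ·) :=
    Set.finite_univ.partiallyWellOrderedOn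
  have hpwo := hpwoA.partiallyWellOrderedOn_sublistForall₂
  set f : ℕ → List A := fun k => ((Set.Infinite.natEmbedding L hinf) k : List A) with hf
  have hfmem : ∀ k, f k ∈ L := fun k => ((Set.Infinite.natEmbedding L hinf) k).2
  have hfinj : Function.Injective f :=
    Subtype.val_injective.comp (Set.Infinite.natEmbedding L hinf).injective
  haveI : IsPreorder (List A) (List.SublistForall₂ fun x1 x2 : A => x1 = x2) := { }
  obtain ⟨g, hg⟩ := hpwo.exists_monotone_subseq (f := f) (fun k => by
    intro x _; exact Set.mem_univ x)
  have hchain : ∀ m k : ℕ, m ≤ k → (f (g m)).Sublist (f (g k)) := by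
    intro m k hmk
    have h := hg m k hmk
    rw [List.sublistForall₂_iff] at h
    obtain ⟨l, h1, h2⟩ := h
    rw [List.forall₂_eq_eq_eq] at h1
    rwa [h1]
  have hstrict : StrictMono (fun k => (f (g k)).length) := by
    apply strictMono_nat_of_lt_succ
    intro k
    have hsub := hchain k (k + 1) (Nat.le_succ k)
    refine lt_of_le_of_ne hsub.length_le ?_
    intro e
    have : f (g k) = f (g (k + 1)) := hsub.eq_of_length e
    have : g k = g (k+1) := hfinj this
    have : (k : ℕ) = k + 1 := g.injective this
    omega
  have hgrow : ∀ m k : ℕ, (f (g m)).length + k ≤ (f (g (m + k))).length := by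
    intro m k
    induction k with
    | zero => simp
    | succ k ih =>
      have := hstrict (show m + k < m + (k+1) by omega)
      simp only at this
      omega
  -- choose the gap size
  obtain ⟨G, hG⟩ := exists_nat_gt ((2 * n - (2 - θ) * (1 - θ) * n) / (2 - θ))
  set u : List A := f (g 0) with hu
  set v : List A := f (g G) with hv
  set w : List A := f (g (G + G)) with hw
  have huv : u.Sublist v := hchain 0 G (Nat.zero_le G)
  have hvw : v.Sublist w := hchain G (G + G) (by omega)
  have huw : u.Sublist w := huv.trans hvw
  have d1 : lev 1 θ v u = (v.length : ℝ) - u.length := lev_sublist_eq' hθ0' huv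
  have d2 : lev 1 θ v w = (w.length : ℝ) - v.length := lev_sublist_eq hθ0' hvw
  have d3 : lev 1 θ u w = (w.length : ℝ) - u.length := lev_sublist_eq hθ0' huw
  have gap1 : (G : ℝ) ≤ (v.length : ℝ) - u.length := by
    have h := hgrow 0 G
    simp only [Nat.zero_add] at h
    rw [hu, hv]
    have h' : ((f (g 0)).length : ℝ) + G ≤ ((f (g G)).length : ℝ) := by exact_mod_cast h
    linarith
  have gap2 : (G : ℝ) ≤ (w.length : ℝ) - v.length := by
    have h := hgrow G G
    rw [hv, hw]
    have h' : ((f (g G)).length : ℝ) + G ≤ ((f (g (G + G))).length : ℝ) := by exact_mod_cast h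
    linarith
  have hs := star ⟨u, hfmem _⟩ ⟨v, hfmem _⟩ ⟨w, hfmem _⟩
  simp only at hs
  rw [d1, d2, d3] at hs
  have hminG : (G : ℝ) ≤ min ((v.length : ℝ) - u.length) ((w.length : ℝ) - v.length) :=
    le_min gap1 gap2
  have hGmul : 2 * n - (2 - θ) * (1 - θ) * n < (2 - θ) * G :=
    (div_lt_iff₀ h2θ).mp hG |>.trans_eq (by ring)
  have hmul : (2 - θ) * ((G : ℝ) + n * (1 - θ)) ≤
      (2 - θ) * (min ((v.length : ℝ) - u.length) ((w.length : ℝ) - v.length) + n * (1 - θ)) :=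
    mul_le_mul_of_nonneg_left (by linarith) (le_of_lt h2θ)
  nlinarith [hs, hmul, hGmul]
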